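/- The number c₂ = (11-√41)/10 is a root of the quadratic 5c₂² - 11c₂ + 4 = 0, and conversely, under the order-five stage conditions, the requirement Γ₂₅(1) = 0 is equivalent (after clearing the nonzero denominators) to a polynomial equation in c₂ having 5c₂² - 11c₂ + 4 as a factor. -/
import Mathlib

/-- c₂ = (11-√41)/10 is a root of 5c² - 11c + 4 = 0, and the stage-order-five
requirement Γ₂₅(1) = 0, after clearing the nonzero denominators
(multiplying by 5c(c-1)(2c-1)), becomes a polynomial equation in c₂ having
5c₂² - 11c₂ + 4 as a factor. -/
theorem stmt17 :
    (5 * ((11 - Real.sqrt 41) / 10)^2 - 11 * ((11 - Real.sqrt 41) / 10) + 4 = 0) ∧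
    ∃ Q : Polynomial ℝ, ∀ c : ℝ, c ≠ 0 → c ≠ 1 → c ≠ 1/2 →
      (let u₂1 : ℝ := ((1:ℝ)+1)^2 * (1 - 2*1 + 3*(1:ℝ)^2/(2*c-1));
      let ta211 : ℝ := (1:ℝ)^2*((1:ℝ)+1) - (1:ℝ)^2*((1:ℝ)+1)^2*(3*c-1)/(2*c*(2*c-1));
      let ta221 : ℝ := (1:ℝ)^2*((1:ℝ)+1)^2 / (2*c*(c-1)*(2*c-1));
      (-(1 - u₂1)/5 + ta211 + (c-1)^4 * ta221 - 1/5) * (5*c*(c-1)*(2*c-1))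
        = (5*c^2 - 11*c + 4) * Q.eval c) := by
  constructor
  · have h : Real.sqrt 41 ^ 2 = 41 := Real.sq_sqrt (by norm_num)
    nlinarith [h]
  · refine ⟨Polynomial.C 2 * Polynomial.X ^ 2 - Polynomial.C 2 * Polynomial.X, ?_⟩
    intro c hc0 hc1 hc2
    have h1 : c - 1 ≠ 0 := sub_ne_zero.mpr hc1
    have h2 : 2 * c - 1 ≠ 0 := by
      intro h; apply hc2; linarith
    simp only [Polynomial.eval_sub, Polynomial.eval_mul, Polynomial.eval_pow,
      Polynomial.eval_C, Polynomial.eval_X]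
    field_simp
    ring
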